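/- Suppose P ∈ ℝ^{n×n} is symmetric positive definite, D ∈ ℝ^{m×m} is invertible, R = −(P B D⁻¹)ᵀ, Q ∈ ℝ^{m×m}, and the generalized unreduced Jacobian F = [[PA + RᵀC, PB + RᵀD],[QᵀC, QᵀD]] satisfies μ₂(F) < 0. Then every eigenvalue of the reduced Jacobian J_r = A − B D⁻¹ C has negative real part. -/

import Mathlib

open Matrix

/-- The 2-logarithmic norm (matrix measure) `μ₂(M) = λ_max((M + Mᵀ)/2)`. -/
noncomputable def mu2 {ι : Type*} [Fintype ι] [DecidableEq ι]
    (M : Matrix ι ι ℝ) : ℝ :=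
  ⨆ i, (Matrix.IsHermitian.eigenvalues (show ((1/2 : ℝ) • (M + Mᵀ)).IsHermitian by
    unfold Matrix.IsHermitian
    ext i j
    simp [Matrix.conjTranspose_apply, Matrix.add_apply, Matrix.smul_apply]
    ring)) i

lemma re_quad {ι : Type*} [Fintype ι] (X : Matrix ι ι ℝ) (v : ι → ℂ) :
    (star v ⬝ᵥ ((X.map (algebraMap ℝ ℂ)) *ᵥ v)).re =
      (fun i => (v i).re) ⬝ᵥ (X *ᵥ fun i => (v i).re)
        + (fun i => (v i).im) ⬝ᵥ (X *ᵥ fun i => (v i).im) := by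
  simp only [dotProduct, mulVec, Pi.star_apply, Complex.re_sum, Complex.mul_re, Complex.im_sum,
    Finset.mul_sum, map_sum, Complex.mul_im, RCLike.star_def, Complex.conj_re, Complex.conj_im,
    Matrix.map_apply, Complex.coe_algebraMap,
    Complex.ofReal_re, Complex.ofReal_im,
    Finset.sum_add_distrib, Finset.sum_sub_distrib]
  simp only [sub_eq_add_neg, ← Finset.sum_neg_distrib]
  rw [← Finset.sum_add_distrib, ← Finset.sum_add_distrib]
  refine Finset.sum_congr rfl fun i _ => ?_
  rw [← Finset.sum_add_distrib, ← Finset.sum_add_distrib]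
  exact Finset.sum_congr rfl fun j _ => by ring

lemma im_quad {ι : Type*} [Fintype ι] (X : Matrix ι ι ℝ) (v : ι → ℂ) :
    (star v ⬝ᵥ ((X.map (algebraMap ℝ ℂ)) *ᵥ v)).im =
      (fun i => (v i).re) ⬝ᵥ (X *ᵥ fun i => (v i).im)
        - (fun i => (v i).im) ⬝ᵥ (X *ᵥ fun i => (v i).re) := by
  simp only [dotProduct, mulVec, Pi.star_apply, Complex.re_sum, Complex.mul_re, Complex.im_sum,
    Finset.mul_sum, map_sum, Complex.mul_im, RCLike.star_def, Complex.conj_re, Complex.conj_im,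
    Matrix.map_apply, Complex.coe_algebraMap,
    Complex.ofReal_re, Complex.ofReal_im,
    Finset.sum_add_distrib, Finset.sum_sub_distrib]
  simp only [sub_eq_add_neg, ← Finset.sum_neg_distrib]
  rw [← Finset.sum_add_distrib, ← Finset.sum_add_distrib]
  refine Finset.sum_congr rfl fun i _ => ?_
  rw [← Finset.sum_add_distrib, ← Finset.sum_add_distrib]
  exact Finset.sum_congr rfl fun j _ => by ring

/-- transpose quadratic form equals the original. -/
lemma dot_transpose_quad {ι : Type*} [Fintype ι] {R : Type*} [CommRing R]
    (X : Matrix ι ι R) (x : ι → R) :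
    x ⬝ᵥ (Xᵀ *ᵥ x) = x ⬝ᵥ (X *ᵥ x) := by
  rw [Matrix.mulVec_transpose, dotProduct_comm, ← Matrix.dotProduct_mulVec]

/-- If `mu2 M < 0` then the quadratic form of `M` is negative on nonzero vectors. -/
lemma quad_neg_of_mu2_neg {ι : Type*} [Fintype ι] [DecidableEq ι]
    (M : Matrix ι ι ℝ) (h : mu2 M < 0) :
    ∀ x : ι → ℝ, x ≠ 0 → x ⬝ᵥ (M *ᵥ x) < 0 := by
  intro x hx
  set S : Matrix ι ι ℝ := (1/2 : ℝ) • (M + Mᵀ) with hSdef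
  have hS : S.IsHermitian := by
    unfold Matrix.IsHermitian
    ext i j
    simp [Matrix.conjTranspose_apply, Matrix.add_apply, Matrix.smul_apply, hSdef]
    ring
  have h' : (⨆ i, hS.eigenvalues i) < 0 := h
  have hev : ∀ i, hS.eigenvalues i ≤ mu2 M := fun i =>
    le_ciSup (Set.Finite.bddAbove (Set.finite_range _)) i
  -- T := mu2 M • 1 - S is positive semidefinite
  set c : ℝ := mu2 M with hc
  have hT : (c • (1 : Matrix ι ι ℝ) - S).PosSemidef := by
    have spec := hS.spectral_theorem
    set U : Matrix ι ι ℝ := (Matrix.IsHermitian.eigenvectorUnitary hS : Matrix ι ι ℝ) with hU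
    have hUU : U * star U = 1 :=
      (Matrix.mem_unitaryGroup_iff).mp (Matrix.IsHermitian.eigenvectorUnitary hS).2
    have key : c • (1 : Matrix ι ι ℝ) - S
        = U * Matrix.diagonal (fun i => c - hS.eigenvalues i) * star U := by
      have h1 : Matrix.diagonal (fun i => c - hS.eigenvalues i)
          = c • (1 : Matrix ι ι ℝ) - Matrix.diagonal (RCLike.ofReal ∘ hS.eigenvalues) := by
        rw [Matrix.smul_one_eq_diagonal, ← Matrix.diagonal_sub]
        congr 1
      rw [Unitary.conjStarAlgAut_apply, ← hU] at spec
      rw [h1, Matrix.mul_sub, Matrix.sub_mul, ← spec]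
      congr 1
      rw [Matrix.mul_smul, Matrix.smul_mul, Matrix.mul_one, hUU]
    rw [key]
    exact (Matrix.PosSemidef.diagonal (fun i => by
      simpa using sub_nonneg.mpr ((hev i).trans_eq rfl))).mul_mul_conjTranspose_same U
  have h0 : (0:ℝ) ≤ x ⬝ᵥ ((c • (1 : Matrix ι ι ℝ) - S) *ᵥ x) := by
    simpa using hT.dotProduct_mulVec_nonneg x
  have hxx : 0 < x ⬝ᵥ x := by
    have h1 : (0:ℝ) ≤ x ⬝ᵥ x := Finset.sum_nonneg fun i _ => mul_self_nonneg (x i)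
    rcases h1.lt_or_eq with h2 | h2
    · exact h2
    · exact absurd ((dotProduct_self_eq_zero).mp h2.symm) hx
  have hSx : x ⬝ᵥ (S *ᵥ x) ≤ c * (x ⬝ᵥ x) := by
    rw [Matrix.sub_mulVec] at h0
    rw [dotProduct_sub] at h0
    have : x ⬝ᵥ ((c • (1 : Matrix ι ι ℝ)) *ᵥ x) = c * (x ⬝ᵥ x) := by
      rw [Matrix.smul_mulVec, Matrix.one_mulVec, dotProduct_smul, smul_eq_mul]
    linarith
  have hquad : x ⬝ᵥ (S *ᵥ x) = x ⬝ᵥ (M *ᵥ x) := by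
    rw [hSdef, Matrix.smul_mulVec, dotProduct_smul, Matrix.add_mulVec,
      dotProduct_add, dot_transpose_quad]
    simp
    ring
  have : c * (x ⬝ᵥ x) < 0 := mul_neg_of_neg_of_pos h hxx
  linarith [hquad ▸ hSx]


/-- if the generalized unreduced Jacobian `F` (with `P ≻ 0`, `D`
invertible, `R = −(P B D⁻¹)ᵀ`) satisfies `μ₂(F) < 0`, then every eigenvalue of the
reduced Jacobian `J_r = A − B D⁻¹ C` has negative real part. -/
theorem small_signal_stable_of_mu2_neg {n m : ℕ}
    (A : Matrix (Fin n) (Fin n) ℝ) (B : Matrix (Fin n) (Fin m) ℝ)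
    (C : Matrix (Fin m) (Fin n) ℝ) (D Q : Matrix (Fin m) (Fin m) ℝ)
    (P : Matrix (Fin n) (Fin n) ℝ) (hP : P.PosDef)
    (hD : IsUnit D.det)
    (R : Matrix (Fin m) (Fin n) ℝ) (hR : R = -(P * B * D⁻¹)ᵀ)
    (F : Matrix (Fin n ⊕ Fin m) (Fin n ⊕ Fin m) ℝ)
    (hF : F = Matrix.fromBlocks (P * A + Rᵀ * C) (P * B + Rᵀ * D) (Qᵀ * C) (Qᵀ * D))
    (hmu : mu2 F < 0) :
    ∀ lam ∈ spectrum ℂ ((A - B * D⁻¹ * C).map (algebraMap ℝ ℂ)), lam.re < 0 := by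
  intro lam hlam
  set J : Matrix (Fin n) (Fin n) ℝ := A - B * D⁻¹ * C with hJ
  set M : Matrix (Fin n) (Fin n) ℝ := P * J with hM
  -- the (1,1) block of F is M
  have hblock : P * A + Rᵀ * C = M := by
    rw [hR, hM, hJ]
    simp [Matrix.transpose_neg, Matrix.transpose_transpose, Matrix.mul_sub, Matrix.neg_mul,
      Matrix.mul_assoc, sub_eq_add_neg, Matrix.mul_add, Matrix.mul_neg]
  -- quadratic form of M is negative on nonzero real vectors
  have hMquad : ∀ v : Fin n → ℝ, v ≠ 0 → v ⬝ᵥ (M *ᵥ v) < 0 := by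
    intro v hv
    have hx : (Sum.elim v 0 : Fin n ⊕ Fin m → ℝ) ≠ 0 := by
      intro hcon
      apply hv
      funext i
      exact congrFun hcon (Sum.inl i)
    have := quad_neg_of_mu2_neg F hmu (Sum.elim v 0) hx
    rw [hF, hblock] at this
    rw [Matrix.fromBlocks_mulVec] at this
    simpa [sumElim_dotProduct_sumElim, Matrix.mulVec_zero] using this
  -- eigenvector for lam
  set Jc : Matrix (Fin n) (Fin n) ℂ := J.map (algebraMap ℝ ℂ) with hJc
  have hlam' : Module.End.HasEigenvalue (Matrix.toLin' Jc) lam := by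
    have heq : Matrix.toLinAlgEquiv (Pi.basisFun ℂ (Fin n)) Jc = Matrix.toLin' Jc := by
      rw [← Matrix.toLin_eq_toLin']; rfl
    rw [← heq, Module.End.hasEigenvalue_iff_mem_spectrum]
    rwa [AlgEquiv.spectrum_eq (Matrix.toLinAlgEquiv (Pi.basisFun ℂ (Fin n))) Jc]
  obtain ⟨v, hvE, hv0⟩ := hlam'.exists_hasEigenvector
  have hEig : Jc *ᵥ v = lam • v := by
    have := Module.End.mem_eigenspace_iff.mp hvE
    rwa [Matrix.toLin'_apply] at this
  -- real and imaginary parts of v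
  set a : Fin n → ℝ := fun i => (v i).re with ha
  set b : Fin n → ℝ := fun i => (v i).im with hb
  have hab : a ≠ 0 ∨ b ≠ 0 := by
    by_contra hcon
    push_neg at hcon
    apply hv0
    funext i
    have h1 := congrFun hcon.1 i
    have h2 := congrFun hcon.2 i
    simp only [ha, hb, Pi.zero_apply] at h1 h2
    exact Complex.ext h1 h2
  -- symmetry of P
  have hPt : Pᵀ = P := by
    ext i j
    have h := congrFun (congrFun hP.1 i) j
    simpa [Matrix.conjTranspose_apply] using h
  have hPsym : ∀ x y : Fin n → ℝ, x ⬝ᵥ (P *ᵥ y) = y ⬝ᵥ (P *ᵥ x) := by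
    intro x y
    rw [Matrix.dotProduct_mulVec, ← Matrix.mulVec_transpose, hPt, dotProduct_comm]
  -- q = vᴴ P v
  set Pc : Matrix (Fin n) (Fin n) ℂ := P.map (algebraMap ℝ ℂ) with hPc
  set q : ℂ := star v ⬝ᵥ (Pc *ᵥ v) with hq
  have hqim : q.im = 0 := by
    rw [hq, hPc, im_quad, hPsym a b]
    ring
  have hqpos : 0 < q.re := by
    rw [hq, hPc, re_quad]
    have hPa : (0:ℝ) ≤ a ⬝ᵥ (P *ᵥ a) := by simpa using hP.posSemidef.dotProduct_mulVec_nonneg a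
    have hPb : (0:ℝ) ≤ b ⬝ᵥ (P *ᵥ b) := by simpa using hP.posSemidef.dotProduct_mulVec_nonneg b
    rcases hab with h1 | h1
    · have := hP.dotProduct_mulVec_pos h1
      simp only [star_trivial] at this
      linarith
    · have := hP.dotProduct_mulVec_pos h1
      simp only [star_trivial] at this
      linarith
  -- w = vᴴ (M + Mᵀ) v
  set N : Matrix (Fin n) (Fin n) ℝ := M + Mᵀ with hN
  have hNle : ∀ x : Fin n → ℝ, x ⬝ᵥ (N *ᵥ x) ≤ 0 := by
    intro x
    rcases eq_or_ne x 0 with rfl | hx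
    · simp
    · have h1 := hMquad x hx
      rw [hN, Matrix.add_mulVec, dotProduct_add, dot_transpose_quad]
      linarith
  have hNlt : ∀ x : Fin n → ℝ, x ≠ 0 → x ⬝ᵥ (N *ᵥ x) < 0 := by
    intro x hx
    have h1 := hMquad x hx
    rw [hN, Matrix.add_mulVec, dotProduct_add, dot_transpose_quad]
    linarith
  set w : ℂ := star v ⬝ᵥ ((N.map (algebraMap ℝ ℂ)) *ᵥ v) with hw
  have hwre : w.re < 0 := by
    rw [hw, re_quad]
    rcases hab with h1 | h1
    · have := hNlt a h1
      have h2 := hNle b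
      linarith
    · have := hNlt b h1
      have h2 := hNle a
      linarith
  -- complex computation of w
  set Mc : Matrix (Fin n) (Fin n) ℂ := M.map (algebraMap ℝ ℂ) with hMc
  have hMcv : Mc *ᵥ v = lam • (Pc *ᵥ v) := by
    rw [hMc, hM, Matrix.map_mul, ← hPc, ← hJc, ← Matrix.mulVec_mulVec, hEig, Matrix.mulVec_smul]
  have h1 : star v ⬝ᵥ (Mc *ᵥ v) = lam * q := by
    rw [hMcv, dotProduct_smul, smul_eq_mul, hq]
  have h2 : star v ⬝ᵥ (Mcᵀ *ᵥ v) = star (lam * q) := by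
    have hH : Mcᵀ = Mcᴴ := by
      ext i j
      simp [hMc, Matrix.conjTranspose_apply, Matrix.map_apply, Complex.conj_ofReal]
    rw [hH, Matrix.dotProduct_mulVec, Matrix.vecMul_conjTranspose, star_star,
      Matrix.star_dotProduct, h1]
  have hwval : w = lam * q + star (lam * q) := by
    rw [hw, hN]
    have hmapadd : ((M + Mᵀ).map (algebraMap ℝ ℂ)) = Mc + Mcᵀ := by
      ext i j
      simp [hMc, Matrix.map_apply, Matrix.transpose_apply, Matrix.add_apply]
    rw [hmapadd, Matrix.add_mulVec, dotProduct_add, h1, h2]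
  have hre : w.re = 2 * (lam.re * q.re) := by
    rw [hwval]
    simp [Complex.add_re, Complex.mul_re, hqim]
    ring
  rw [hre] at hwre
  nlinarith [hqpos, hwre]
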